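/- Let m, k be integers with 1 ≤ k ≤ m, let N ≥ 1 be a natural number, and let h be a real with 0 < h ≤ 1. Then Σ_{n=m−k}^{m−1} N^n·N^{−2m}·h^n·(1 + h^{−(m−k)}) ≤ 2m·N^{−(m+k)}·(1 + (N·h)^{k−1}). -/
import Mathlib


open Real

lemma pow_le_one_add_pow (x : ℝ) (hx : 0 ≤ x) {j K : ℕ} (hj : j ≤ K) :
    x ^ j ≤ 1 + x ^ K := by
  rcases le_total x 1 with hx1 | hx1
  · have h1 : x ^ j ≤ 1 := pow_le_one₀ hx hx1
    have h2 : 0 ≤ x ^ K := pow_nonneg hx K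
    linarith
  · have h1 : x ^ j ≤ x ^ K := pow_le_pow_right₀ hx1 hj
    linarith

/-- Computational core of estimate (13) in the proof of Lemma 4: for `1 ≤ k ≤ m`,
`N ≥ 1` and `0 < h ≤ 1` one has
`Σ_{n=m-k}^{m-1} N^n·N^{-2m}·h^n·(1 + h^{-(m-k)}) ≤ 2m·N^{-(m+k)}·(1 + (N·h)^{k-1})`. -/
theorem stmt_11 (m k : ℕ) (hk1 : 1 ≤ k) (hkm : k ≤ m) (N : ℕ) (hN : 1 ≤ N)
    (h : ℝ) (hh0 : 0 < h) (hh1 : h ≤ 1) :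
    ∑ n ∈ Finset.Icc (m - k) (m - 1),
        (N : ℝ) ^ n * (N : ℝ) ^ (-(2 * (m : ℤ))) * h ^ n * (1 + h ^ (-((m : ℤ) - k)))
      ≤ 2 * m * (N : ℝ) ^ (-((m : ℤ) + k)) * (1 + ((N : ℝ) * h) ^ (k - 1)) := by
  have hN1 : (1 : ℝ) ≤ (N : ℝ) := by exact_mod_cast hN
  have hNpos : (0 : ℝ) < (N : ℝ) := by linarith
  have e1 : (N : ℝ) ^ (-(2 * (m : ℤ))) = ((N : ℝ) ^ (2 * m))⁻¹ := by
    rw [zpow_neg]; congr 1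
  have e2 : h ^ (-((m : ℤ) - k)) = (h ^ (m - k))⁻¹ := by
    rw [zpow_neg]; congr 1
    rw [show ((m : ℤ) - k) = ((m - k : ℕ) : ℤ) from (Nat.cast_sub hkm).symm, zpow_natCast]
  have e3 : (N : ℝ) ^ (-((m : ℤ) + k)) = ((N : ℝ) ^ (m + k))⁻¹ := by
    rw [zpow_neg]; congr 1
  simp only [e1, e2, e3]
  set X : ℝ := 2 * ((N : ℝ) ^ (m + k))⁻¹ * (1 + ((N : ℝ) * h) ^ (k - 1)) with hX
  have hXnn : 0 ≤ X := by positivity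
  have key : ∀ n ∈ Finset.Icc (m - k) (m - 1),
      (N : ℝ) ^ n * ((N : ℝ) ^ (2 * m))⁻¹ * h ^ n * (1 + (h ^ (m - k))⁻¹) ≤ X := by
    intro n hn
    rw [Finset.mem_Icc] at hn
    obtain ⟨hn1, hn2⟩ := hn
    set j : ℕ := n - (m - k) with hj
    have hnj : n = (m - k) + j := by omega
    have hjk : j ≤ k - 1 := by omega
    have h2m : (0 : ℝ) < (N : ℝ) ^ (2 * m) := by positivity
    have hmk : (0 : ℝ) < h ^ (m - k) := by positivity
    have hmpk : (0 : ℝ) < (N : ℝ) ^ (m + k) := by positivity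
    have eL : (N : ℝ) ^ n * ((N : ℝ) ^ (2 * m))⁻¹ * h ^ n * (1 + (h ^ (m - k))⁻¹)
        = ((N : ℝ) ^ n * h ^ n * (h ^ (m - k) + 1)) / ((N : ℝ) ^ (2 * m) * h ^ (m - k)) := by
      field_simp; try ring
    have eR : X = (2 * (1 + ((N : ℝ) * h) ^ (k - 1))) / ((N : ℝ) ^ (m + k)) := by
      rw [hX]; field_simp
    rw [eL, eR, div_le_div_iff₀ (by positivity) hmpk]
    have core : ((N : ℝ) * h) ^ j * (h ^ (m - k) + 1) ≤ (1 + ((N : ℝ) * h) ^ (k - 1)) * 2 := by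
      have c1 : ((N : ℝ) * h) ^ j ≤ 1 + ((N : ℝ) * h) ^ (k - 1) :=
        pow_le_one_add_pow _ (by positivity) hjk
      have c2 : h ^ (m - k) + 1 ≤ 2 := by
        have := pow_le_one₀ hh0.le hh1 (n := m - k)
        linarith
      exact mul_le_mul c1 c2 (by positivity) (by positivity)
    have hsum : m - k + (m + k) = 2 * m := by omega
    calc (N : ℝ) ^ n * h ^ n * (h ^ (m - k) + 1) * (N : ℝ) ^ (m + k)
        = ((N : ℝ) ^ (m - k) * (N : ℝ) ^ (m + k)) * h ^ (m - k)
            * (((N : ℝ) ^ j * h ^ j) * (h ^ (m - k) + 1)) := by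
          rw [hnj, pow_add, pow_add]; ring
      _ = (N : ℝ) ^ (2 * m) * h ^ (m - k) * (((N : ℝ) * h) ^ j * (h ^ (m - k) + 1)) := by
          rw [← pow_add, hsum, mul_pow]
      _ ≤ (N : ℝ) ^ (2 * m) * h ^ (m - k) * ((1 + ((N : ℝ) * h) ^ (k - 1)) * 2) := by
          exact mul_le_mul_of_nonneg_left core (by positivity)
      _ = 2 * (1 + ((N : ℝ) * h) ^ (k - 1)) * ((N : ℝ) ^ (2 * m) * h ^ (m - k)) := by ring
  have hsum := Finset.sum_le_card_nsmul _ _ X key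
  have hcard : (Finset.Icc (m - k) (m - 1)).card = k := by
    rw [Nat.card_Icc]; omega
  rw [hcard, nsmul_eq_mul] at hsum
  have hkm' : (k : ℝ) ≤ (m : ℝ) := by exact_mod_cast hkm
  calc ∑ n ∈ Finset.Icc (m - k) (m - 1),
        (N : ℝ) ^ n * ((N : ℝ) ^ (2 * m))⁻¹ * h ^ n * (1 + (h ^ (m - k))⁻¹)
      ≤ (k : ℝ) * X := hsum
    _ ≤ (m : ℝ) * X := mul_le_mul_of_nonneg_right hkm' hXnn
    _ = 2 * m * ((N : ℝ) ^ (m + k))⁻¹ * (1 + ((N : ℝ) * h) ^ (k - 1)) := by rw [hX]; ring
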